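/- For all natural numbers n, i and all positive integers p, the polynomial congruence ℒ_{n+p}^i(X) ≡ ℒ_n^i(X) · ℒ_p^i(X) (mod p) holds in ℤ[X]. (Equivalently, (n+p)!·L_{n+p}^i(x) ≡ n!·L_n^i(x) · p!·L_p^i(x) (mod p), the congruence of Carlitz.) -/

import Mathlib

open Polynomial MvPolynomial

/-- The scaled generalized Laguerre polynomial `ℒ_n^α(X) = n! · L_n^α(X) ∈ ℤ[X]`. -/
noncomputable def sLag (n α : ℕ) : Polynomial ℤ :=
  ∑ j ∈ Finset.range (n + 1),
    Polynomial.C ((-1 : ℤ) ^ j * ((n.factorial / j.factorial : ℕ) : ℤ) *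
      ((n + α).choose (n - j) : ℤ)) * Polynomial.X ^ j

lemma sLag_coeff (n α k : ℕ) :
    (sLag n α).coeff k =
      if k ≤ n then (-1 : ℤ) ^ k * ((n.factorial / k.factorial : ℕ) : ℤ) *
        ((n + α).choose (n - k) : ℤ) else 0 := by
  rw [sLag, Polynomial.finset_sum_coeff]
  simp only [Polynomial.coeff_C_mul, Polynomial.coeff_X_pow, mul_ite, mul_one, mul_zero]
  rw [Finset.sum_ite_eq (Finset.range (n + 1))]
  simp [Nat.lt_succ_iff]

lemma fac_div_eq_desc {n k : ℕ} (h : k ≤ n) :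
    n.factorial / k.factorial = n.descFactorial (n - k) := by
  have h1 : n - (n - k) = k := by omega
  rw [Nat.descFactorial_eq_div (Nat.sub_le n k), h1]

lemma desc_mod (p a m : ℕ) (h : m ≤ a) :
    (((a + p).descFactorial m : ℕ) : ZMod p) = ((a.descFactorial m : ℕ) : ZMod p) := by
  rw [Nat.descFactorial_eq_prod_range, Nat.descFactorial_eq_prod_range, Nat.cast_prod,
    Nat.cast_prod]
  refine Finset.prod_congr rfl fun t ht => ?_
  rw [Finset.mem_range] at ht
  have h1 : a + p - t = (a - t) + p := by omega
  rw [h1, Nat.cast_add, ZMod.natCast_self, add_zero]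

lemma key (p n i m : ℕ) (h : m ≤ n) :
    (((n + p).descFactorial m * (n + p + i).choose m : ℕ) : ZMod p) =
      ((n.descFactorial m * (n + i).choose m : ℕ) : ZMod p) := by
  have hd : (Nat.descFactorial n m : ZMod p) =
      (m.factorial : ZMod p) * (n.choose m : ZMod p) := by
    rw [Nat.descFactorial_eq_factorial_mul_choose]; push_cast; ring
  have h2 : ((m.factorial : ZMod p)) * ((n + p + i).choose m : ZMod p) =
      (m.factorial : ZMod p) * ((n + i).choose m : ZMod p) := by
    have e1 : (m.factorial * (n + p + i).choose m : ℕ) = (n + p + i).descFactorial m :=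
      (Nat.descFactorial_eq_factorial_mul_choose _ _).symm
    have e2 : (m.factorial * (n + i).choose m : ℕ) = (n + i).descFactorial m :=
      (Nat.descFactorial_eq_factorial_mul_choose _ _).symm
    have e3 : n + p + i = (n + i) + p := by ring
    calc (m.factorial : ZMod p) * ((n + p + i).choose m : ZMod p)
        = ((m.factorial * (n + p + i).choose m : ℕ) : ZMod p) := by push_cast; ring
      _ = (((n + i + p).descFactorial m : ℕ) : ZMod p) := by rw [e1, e3]
      _ = (((n + i).descFactorial m : ℕ) : ZMod p) :=
          desc_mod p (n + i) m (h.trans (Nat.le_add_right n i))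
      _ = ((m.factorial * (n + i).choose m : ℕ) : ZMod p) := by rw [e2]
      _ = _ := by push_cast; ring
  push_cast
  rw [desc_mod p n m h, hd]
  linear_combination ((n.choose m : ZMod p)) * h2

lemma dvd_desc (n p k : ℕ) (hk : k < p) : p ∣ (n + p).descFactorial (n + p - k) := by
  rw [Nat.descFactorial_eq_prod_range]
  have hn : n ∈ Finset.range (n + p - k) := by
    rw [Finset.mem_range]; omega
  have : n + p - n = p := by omega
  calc p ∣ (n + p - n) := by rw [this]
    _ ∣ _ := Finset.dvd_prod_of_mem _ hn

lemma sLag_map (n i p : ℕ) (hp : 0 < p) :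
    (sLag (n + p) i).map (Int.castRingHom (ZMod p)) =
      (sLag n i).map (Int.castRingHom (ZMod p)) * (-Polynomial.X) ^ p := by
  have hrw : (sLag n i).map (Int.castRingHom (ZMod p)) * (-Polynomial.X) ^ p =
      ((sLag n i).map (Int.castRingHom (ZMod p)) * Polynomial.X ^ p) *
        Polynomial.C ((-1 : ZMod p) ^ p) := by
    rw [map_pow, map_neg, map_one]; ring
  rw [hrw]
  ext k
  rw [Polynomial.coeff_mul_C, Polynomial.coeff_mul_X_pow', Polynomial.coeff_map,
    Polynomial.coeff_map, sLag_coeff, sLag_coeff]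
  by_cases h1 : p ≤ k
  · by_cases h2 : k ≤ n + p
    · have h3 : k - p ≤ n := by omega
      rw [if_pos h2, if_pos h1, if_pos h3]
      have e1 : (n + p).factorial / k.factorial = (n + p).descFactorial (n + p - k) :=
        fac_div_eq_desc h2
      have e2 : n.factorial / (k - p).factorial = n.descFactorial (n - (k - p)) :=
        fac_div_eq_desc h3
      have e3 : n + p - k = n - (k - p) := by omega
      rw [e1, e2, e3]
      have hkey := key p n i (n - (k - p)) (Nat.sub_le _ _)
      push_cast at hkey
      have hsgn : ((-1 : ZMod p)) ^ (k - p) * (-1 : ZMod p) ^ p = (-1) ^ k := by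
        rw [← pow_add]; congr 1; omega
      simp only [map_mul, map_pow, map_neg, map_one, map_natCast]
      linear_combination ((-1 : ZMod p) ^ k) * hkey -
        ((n.descFactorial (n - (k - p)) : ZMod p) *
          (((n + i).choose (n - (k - p)) : ZMod p))) * hsgn
    · have h3 : ¬ (k - p ≤ n) := by omega
      simp [h2, h3]
  · have h2 : k ≤ n + p := by omega
    rw [if_pos h2, if_neg h1]
    have e1 : (n + p).factorial / k.factorial = (n + p).descFactorial (n + p - k) :=
      fac_div_eq_desc h2
    rw [e1]
    have hdvd : p ∣ (n + p).descFactorial (n + p - k) := dvd_desc n p k (by omega)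
    have hz : (((n + p).descFactorial (n + p - k) : ℕ) : ZMod p) = 0 :=
      (ZMod.natCast_eq_zero_iff _ _).mpr hdvd
    simp only [map_mul, map_pow, map_neg, map_one, map_natCast]
    rw [hz]
    ring

/-- Carlitz' congruence: `(n+p)!·L_{n+p}^i(x) ≡ n!·L_n^i(x) · p!·L_p^i(x) (mod p)`. -/
theorem stmt_10 (n i : ℕ) (p : ℕ) (hp : 0 < p) :
    ∀ k : ℕ, (p : ℤ) ∣ (sLag (n + p) i - sLag n i * sLag p i).coeff k := by
  intro k
  have h0 : sLag 0 i = 1 := by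
    simp [sLag]
  have hmap : (sLag (n + p) i).map (Int.castRingHom (ZMod p)) =
      (sLag n i * sLag p i).map (Int.castRingHom (ZMod p)) := by
    rw [Polynomial.map_mul, sLag_map n i p hp]
    have hp' : (sLag p i).map (Int.castRingHom (ZMod p)) = (-Polynomial.X) ^ p := by
      have := sLag_map 0 i p hp
      rw [zero_add, h0] at this
      simpa using this
    rw [hp']
  have := congrArg (fun q => Polynomial.coeff q k) hmap
  simp only [Polynomial.coeff_map] at this
  rw [← ZMod.intCast_zmod_eq_zero_iff_dvd]
  rw [Polynomial.coeff_sub]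
  push_cast
  simpa [sub_eq_zero] using this
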